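/- Let π be a permutation of {1,…,n} of the form π = 1π' with π' dominant, let r and c be the number of rows and columns occupied by L(π), and set m = r + c − |Ess(π)|. Then there exist a tree T on vertex set {1,…,m} and a linear map φ : ℝ^{2n} → ℝ^m such that φ(Φ(P(Y_π))) = P(T); moreover the affine dimension of P(T) equals m − 1 = r + c − |Ess(π)| − 1. (This expresses that the moment polytope Φ(P(Y_π)) can be degenerated onto the acyclic root polytope P(T(π)).) -/

import Mathlib

open scoped BigOperators

/-- `π` is a permutation of `{1,…,n}` (extended to `ℕ` by fixing all other points). -/
def IsPermOn (n : ℕ) (π : Equiv.Perm ℕ) : Prop :=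
  ∀ i : ℕ, ¬(1 ≤ i ∧ i ≤ n) → π i = i

/-- The Rothe diagram `D(π) = {(π(j), i) : i < j, π(i) > π(j)}`. -/
def RD (π : Equiv.Perm ℕ) : Set (ℕ × ℕ) :=
  {p | ∃ i j : ℕ, i < j ∧ π j < π i ∧ p = (π j, i)}

/-- Two boxes are edge-adjacent: `|i−i'| + |j−j'| = 1`. -/
def AdjBox (p q : ℕ × ℕ) : Prop :=
  (p.1 = q.1 ∧ (p.2 = q.2 + 1 ∨ q.2 = p.2 + 1)) ∨
  (p.2 = q.2 ∧ (p.1 = q.1 + 1 ∨ q.1 = p.1 + 1))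

/-- The dominant piece `dom(π)`: the boxes of `D(π)` joined to `(1,1)` by a path of
edge-adjacent boxes of `D(π)` (empty if `(1,1) ∉ D(π)`). -/
def domPiece (π : Equiv.Perm ℕ) : Set (ℕ × ℕ) :=
  {q | (1, 1) ∈ RD π ∧
    Relation.ReflTransGen (fun a b => b ∈ RD π ∧ AdjBox a b) (1, 1) q}

/-- `NW(π)`: the boxes lying (weakly) northwest of some box of `D(π)`. -/
def NWset (π : Equiv.Perm ℕ) : Set (ℕ × ℕ) :=
  {p | 1 ≤ p.1 ∧ 1 ≤ p.2 ∧ ∃ q ∈ RD π, p.1 ≤ q.1 ∧ p.2 ≤ q.2}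

/-- `L(π) = NW(π) ∖ dom(π)`. -/
def Lset (π : Equiv.Perm ℕ) : Set (ℕ × ℕ) := NWset π \ domPiece π

/-- `L'(π) = L(π) ∖ D(π)`. -/
def L'set (π : Equiv.Perm ℕ) : Set (ℕ × ℕ) := Lset π \ RD π

/-- Fulton's essential set: the southeast corners of `D(π)`. -/
def EssSet (π : Equiv.Perm ℕ) : Set (ℕ × ℕ) :=
  {p | p ∈ RD π ∧ (p.1 + 1, p.2) ∉ RD π ∧ (p.1, p.2 + 1) ∉ RD π}
/-- `π = 1π'` with `π'` dominant: `π(1) = 1` and `D(π)` is the Young diagram of the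
nonempty partition `λ = (lam 1 ≥ … ≥ lam ℓ > 0)` with northwest-most box at `(2,2)`. -/
def DominantOne (π : Equiv.Perm ℕ) (ℓ : ℕ) (lam : ℕ → ℕ) : Prop :=
  π 1 = 1 ∧ 1 ≤ ℓ ∧
  (∀ i j : ℕ, 1 ≤ i → i ≤ j → j ≤ ℓ → lam j ≤ lam i) ∧
  (∀ i : ℕ, 1 ≤ i → i ≤ ℓ → 1 ≤ lam i) ∧
  RD π = {p | ∃ i j : ℕ, 1 ≤ i ∧ i ≤ ℓ ∧ 1 ≤ j ∧ j ≤ lam i ∧ p = (i + 1, j + 1)}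
/-- The vertex `e_i - e_{n+j} ∈ ℝ^{2n}` associated to the (1-indexed) box `(i,j)`. -/
def vtx (n : ℕ) (p : ℕ × ℕ) : Fin (2 * n) → ℝ :=
  fun t => (if (t : ℕ) = p.1 - 1 then 1 else 0) - (if (t : ℕ) = n + p.2 - 1 then 1 else 0)

/-- `A` occupies exactly the rows `1,…,r` and the columns `1,…,c`. -/
def Occupies (A : Set (ℕ × ℕ)) (r c : ℕ) : Prop :=
  (∀ p ∈ A, 1 ≤ p.1 ∧ p.1 ≤ r ∧ 1 ≤ p.2 ∧ p.2 ≤ c) ∧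
  (∀ i, 1 ≤ i → i ≤ r → ∃ j, (i, j) ∈ A) ∧
  (∀ j, 1 ≤ j → j ≤ c → ∃ i, (i, j) ∈ A)

/-- The vector `e_a - e_b ∈ ℝ^m`. -/
def evec (m : ℕ) (a b : Fin m) : Fin m → ℝ :=
  fun t => (if t = a then 1 else 0) - (if t = b then 1 else 0)

/-- The acyclic root polytope `P(T)` of a tree `T` on `{1,…,m}`: the convex hull of `0`
together with all positive roots `e_a - e_b` (`a < b`) lying in the cone spanned by the
edge vectors of `T`. -/
def rootPoly {m : ℕ} (T : SimpleGraph (Fin m)) : Set (Fin m → ℝ) :=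
  convexHull ℝ ({0} ∪
    {v : Fin m → ℝ | ∃ a b : Fin m, a < b ∧ v = evec m a b ∧
      ∃ cf : Fin m × Fin m → ℝ, (∀ e, 0 ≤ cf e) ∧
        (∀ e : Fin m × Fin m, ¬(e.1 < e.2 ∧ T.Adj e.1 e.2) → cf e = 0) ∧
        v = ∑ e : Fin m × Fin m, cf e • evec m e.1 e.2})



namespace St13

variable (ℓ : ℕ) (lam : ℕ → ℕ)

/-- The set of "corner rows" of the partition `lam` (1-indexed, values in `[1,ℓ]`). -/
def Cfin : Finset ℕ := (Finset.Icc 1 ℓ).filter fun a => a = ℓ ∨ lam (a+1) < lam a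

/-- The free (non-identified) columns. -/
def Freef : Finset ℕ :=
  (Finset.Icc 1 (lam 1 + 1)).filter fun j => ¬∃ a ∈ Cfin ℓ lam, lam a + 1 = j

/-- number of free columns strictly left of `j`. -/
def Fb (j : ℕ) : ℕ := ((Freef ℓ lam).filter (· < j)).card

/-- the last row `a ∈ [1,ℓ]` with `j ≤ lam a + 1`. -/
def att (j : ℕ) : ℕ := Nat.findGreatest (fun a => 1 ≤ a ∧ j ≤ lam a + 1) ℓ

/-- the smallest corner `> x`. -/
def nx (x : ℕ) : ℕ :=
  if h : ((Cfin ℓ lam).filter fun a => x < a).Nonempty then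
    ((Cfin ℓ lam).filter fun a => x < a).min' h
  else ℓ + 1

/-- the smallest corner `≥ x`. -/
def nxc (x : ℕ) : ℕ := if x ∈ Cfin ℓ lam then x else nx ℓ lam x

/-- the corner `a` with `lam a + 1 = j`, when it exists. -/
def theA (j : ℕ) : ℕ := Nat.findGreatest (fun a => a ∈ Cfin ℓ lam ∧ lam a + 1 = j) ℓ

/-- label of column `j` (0-indexed label in `[0, m)`). -/
def wl (j : ℕ) : ℕ :=
  if ∃ a ∈ Cfin ℓ lam, lam a + 1 = j then theA ℓ lam j else ℓ + 1 + Fb ℓ lam j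

/-- edge relation (on labels, as naturals). -/
def ER (p q : ℕ) : Prop :=
  (p < ℓ ∧ q = nx ℓ lam p) ∨
  (∃ j ∈ Freef ℓ lam, p = att ℓ lam j ∧ q = ℓ + 1 + Fb ℓ lam j)

/-- the set of admissible roots (on labels). -/
def RsetN (p q : ℕ) : Prop :=
  p < q ∧ p ≤ ℓ ∧
    (q ∈ Cfin ℓ lam ∨ ∃ j ∈ Freef ℓ lam, q = ℓ + 1 + Fb ℓ lam j ∧ p ≤ att ℓ lam j)

section Basic

variable {ℓ lam}

lemma mem_Cfin {a : ℕ} :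
    a ∈ Cfin ℓ lam ↔ 1 ≤ a ∧ a ≤ ℓ ∧ (a = ℓ ∨ lam (a+1) < lam a) := by
  simp [Cfin, and_assoc]

lemma top_mem_Cfin (hℓ : 1 ≤ ℓ) : ℓ ∈ Cfin ℓ lam := by
  simp [mem_Cfin, hℓ]

lemma Cfin_strictAntiOn
    (hA : ∀ i j : ℕ, 1 ≤ i → i ≤ j → j ≤ ℓ → lam j ≤ lam i)
    {a b : ℕ} (ha : a ∈ Cfin ℓ lam) (hb : b ∈ Cfin ℓ lam) (hab : a < b) :
    lam b < lam a := by
  rw [mem_Cfin] at ha hb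
  have haℓ : a ≠ ℓ := by omega
  have h1 : lam (a+1) < lam a := ha.2.2.resolve_left haℓ
  have h2 : lam b ≤ lam (a+1) := hA (a+1) b (by omega) (by omega) (by omega)
  omega

lemma card_Freef_add (hℓ : 1 ≤ ℓ)
    (hA : ∀ i j : ℕ, 1 ≤ i → i ≤ j → j ≤ ℓ → lam j ≤ lam i)
    (hP : ∀ i : ℕ, 1 ≤ i → i ≤ ℓ → 1 ≤ lam i) :
    (Freef ℓ lam).card + (Cfin ℓ lam).card = lam 1 + 1 := by
  classical
  have himg : Freef ℓ lam = Finset.Icc 1 (lam 1 + 1) \ (Cfin ℓ lam).image (fun a => lam a + 1) := by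
    ext j
    simp [Freef, Finset.mem_sdiff, Finset.mem_image, and_comm]
  have hsub : (Cfin ℓ lam).image (fun a => lam a + 1) ⊆ Finset.Icc 1 (lam 1 + 1) := by
    intro j hj
    simp only [Finset.mem_image] at hj
    obtain ⟨a, ha, rfl⟩ := hj
    rw [mem_Cfin] at ha
    have := hA 1 a le_rfl ha.1 ha.2.1
    simp [Finset.mem_Icc]
    omega
  have hinj : Set.InjOn (fun a => lam a + 1) ↑(Cfin ℓ lam) := by
    intro a ha b hb hab
    have hab' : lam a + 1 = lam b + 1 := hab
    by_contra hne
    rcases Nat.lt_or_ge a b with h | h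
    · have := Cfin_strictAntiOn hA ha hb h; omega
    · have hba : b < a := by omega
      have := Cfin_strictAntiOn hA hb ha hba; omega
  have hcard : ((Cfin ℓ lam).image (fun a => lam a + 1)).card = (Cfin ℓ lam).card :=
    Finset.card_image_of_injOn hinj
  rw [himg, Finset.card_sdiff_of_subset hsub, hcard]
  have h1 : (Cfin ℓ lam).card ≤ (Finset.Icc 1 (lam 1 + 1)).card :=
    hcard ▸ Finset.card_le_card hsub
  simp only [Nat.card_Icc] at h1 ⊢
  omega

lemma mem_Freef {j : ℕ} :
    j ∈ Freef ℓ lam ↔ (1 ≤ j ∧ j ≤ lam 1 + 1) ∧ ¬∃ a ∈ Cfin ℓ lam, lam a + 1 = j := by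
  simp [Freef, Finset.mem_Icc]

lemma Fb_lt_card {j : ℕ} (hj : j ∈ Freef ℓ lam) : Fb ℓ lam j < (Freef ℓ lam).card := by
  apply Finset.card_lt_card
  constructor
  · exact Finset.filter_subset _ _
  · intro hsub
    have := hsub hj
    simp at this

lemma Fb_strictMono {j j' : ℕ} (hj : j ∈ Freef ℓ lam) (hjj : j < j') :
    Fb ℓ lam j < Fb ℓ lam j' := by
  apply Finset.card_lt_card
  constructor
  · intro x hx
    simp only [Finset.mem_filter] at hx ⊢
    exact ⟨hx.1, by omega⟩
  · intro hsub
    have hjmem : j ∈ (Freef ℓ lam).filter (· < j') := by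
      simp only [Finset.mem_filter]; exact ⟨hj, hjj⟩
    have := hsub hjmem
    simp at this

lemma Fb_injOn {j j' : ℕ} (hj : j ∈ Freef ℓ lam) (hj' : j' ∈ Freef ℓ lam)
    (h : Fb ℓ lam j = Fb ℓ lam j') : j = j' := by
  rcases Nat.lt_trichotomy j j' with hlt | he | hgt
  · have := Fb_strictMono hj hlt; omega
  · exact he
  · have := Fb_strictMono hj' hgt; omega

lemma Fb_surj {t : ℕ} (ht : t < (Freef ℓ lam).card) :
    ∃ j ∈ Freef ℓ lam, Fb ℓ lam j = t := by
  classical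
  have himg : (Freef ℓ lam).image (Fb ℓ lam) = Finset.range (Freef ℓ lam).card := by
    apply Finset.eq_of_subset_of_card_le
    · intro x hx
      simp only [Finset.mem_image] at hx
      obtain ⟨j, hj, rfl⟩ := hx
      simpa using Fb_lt_card hj
    · rw [Finset.card_range, Finset.card_image_of_injOn]
      intro a ha b hb
      exact Fb_injOn ha hb
  have : t ∈ (Freef ℓ lam).image (Fb ℓ lam) := by
    rw [himg]; simpa using ht
  simpa using this


variable {j x : ℕ}

lemma att_pos (hℓ : 1 ≤ ℓ) {j : ℕ} (hj2 : j ≤ lam 1 + 1) : 1 ≤ att ℓ lam j :=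
  Nat.le_findGreatest (P := fun a => 1 ≤ a ∧ j ≤ lam a + 1) hℓ ⟨le_rfl, hj2⟩

lemma att_le : att ℓ lam j ≤ ℓ := Nat.findGreatest_le ℓ

lemma att_spec (hℓ : 1 ≤ ℓ) {j : ℕ} (hj2 : j ≤ lam 1 + 1) : j ≤ lam (att ℓ lam j) + 1 :=
  (Nat.findGreatest_spec (P := fun a => 1 ≤ a ∧ j ≤ lam a + 1) hℓ ⟨le_rfl, hj2⟩).2

lemma le_att {j a : ℕ} (ha1 : 1 ≤ a) (ha2 : a ≤ ℓ) (haj : j ≤ lam a + 1) :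
    a ≤ att ℓ lam j :=
  Nat.le_findGreatest (P := fun a => 1 ≤ a ∧ j ≤ lam a + 1) ha2 ⟨ha1, haj⟩

lemma att_mem_Cfin (hℓ : 1 ≤ ℓ) {j : ℕ} (hj2 : j ≤ lam 1 + 1) : att ℓ lam j ∈ Cfin ℓ lam := by
  rw [mem_Cfin]
  refine ⟨att_pos hℓ hj2, att_le, ?_⟩
  by_cases h : att ℓ lam j = ℓ
  · exact Or.inl h
  · right
    have hlt : att ℓ lam j < ℓ := lt_of_le_of_ne att_le h
    have hnot : ¬(1 ≤ att ℓ lam j + 1 ∧ j ≤ lam (att ℓ lam j + 1) + 1) :=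
      Nat.findGreatest_is_greatest (P := fun a => 1 ≤ a ∧ j ≤ lam a + 1) (n := ℓ)
        (by show att ℓ lam j < att ℓ lam j + 1; omega) (by omega)
    have hsp := att_spec hℓ hj2
    omega


section Nx

variable (hℓ : 1 ≤ ℓ) {x : ℕ} (hx : x < ℓ)
include hℓ hx
lemma nx_spec : nx ℓ lam x ∈ Cfin ℓ lam ∧ x < nx ℓ lam x := by
  have hne : ((Cfin ℓ lam).filter fun a => x < a).Nonempty := by
    refine ⟨ℓ, ?_⟩
    simp only [Finset.mem_filter]
    exact ⟨by simp [mem_Cfin, hℓ], hx⟩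
  rw [nx, dif_pos hne]
  have := Finset.min'_mem _ hne
  simp only [Finset.mem_filter] at this
  exact this

lemma nx_min {a : ℕ} (ha : a ∈ Cfin ℓ lam) (hxa : x < a) : nx ℓ lam x ≤ a := by
  have hne : ((Cfin ℓ lam).filter fun b => x < b).Nonempty := by
    refine ⟨ℓ, ?_⟩
    simp only [Finset.mem_filter]
    exact ⟨by simp [mem_Cfin, hℓ], hx⟩
  rw [nx, dif_pos hne]
  exact Finset.min'_le _ a (by simp only [Finset.mem_filter]; exact ⟨ha, hxa⟩)

lemma nx_le_top : nx ℓ lam x ≤ ℓ := nx_min hℓ hx (by simp [mem_Cfin, hℓ]) hx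

end Nx

lemma nxc_self {x : ℕ} (hx : x ∈ Cfin ℓ lam) : nxc ℓ lam x = x := if_pos hx

lemma nxc_of_not_mem {x : ℕ} (hx : x ∉ Cfin ℓ lam) : nxc ℓ lam x = nx ℓ lam x := if_neg hx

lemma le_nxc (hℓ : 1 ≤ ℓ) {x : ℕ} (hx : x ≤ ℓ) : x ≤ nxc ℓ lam x := by
  by_cases h : x ∈ Cfin ℓ lam
  · rw [nxc_self h]
  · have hxℓ : x < ℓ := by
      rcases Nat.lt_or_ge x ℓ with h' | h'
      · exact h'
      · exfalso; exact h (by simp [mem_Cfin]; omega)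
    rw [nxc_of_not_mem h]
    exact le_of_lt (nx_spec hℓ hxℓ).2

lemma nxc_mem (hℓ : 1 ≤ ℓ) {x : ℕ} (hx : x ≤ ℓ) : nxc ℓ lam x ∈ Cfin ℓ lam := by
  by_cases h : x ∈ Cfin ℓ lam
  · rw [nxc_self h]; exact h
  · have hxℓ : x < ℓ := by
      rcases Nat.lt_or_ge x ℓ with h' | h'
      · exact h'
      · exfalso; exact h (by simp [mem_Cfin]; omega)
    rw [nxc_of_not_mem h]
    exact (nx_spec hℓ hxℓ).1

lemma nxc_min (hℓ : 1 ≤ ℓ) {x a : ℕ} (ha : a ∈ Cfin ℓ lam) (hxa : x ≤ a) :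
    nxc ℓ lam x ≤ a := by
  by_cases h : x ∈ Cfin ℓ lam
  · rw [nxc_self h]; exact hxa
  · have hx : x < a := lt_of_le_of_ne hxa (by rintro rfl; exact h ha)
    have hxℓ : x < ℓ := by
      rw [mem_Cfin] at ha; omega
    rw [nxc_of_not_mem h]
    exact nx_min hℓ hxℓ ha hx

lemma theA_eq (hℓ : 1 ≤ ℓ)
    (hA : ∀ i j : ℕ, 1 ≤ i → i ≤ j → j ≤ ℓ → lam j ≤ lam i)
    {b : ℕ} (hb : b ∈ Cfin ℓ lam) : theA ℓ lam (lam b + 1) = b := by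
  have hble : b ≤ ℓ := (mem_Cfin.1 hb).2.1
  have hb1 : 1 ≤ b := (mem_Cfin.1 hb).1
  have hle : b ≤ theA ℓ lam (lam b + 1) :=
    Nat.le_findGreatest (P := fun a => a ∈ Cfin ℓ lam ∧ lam a + 1 = lam b + 1) hble ⟨hb, rfl⟩
  have hspec : theA ℓ lam (lam b + 1) ∈ Cfin ℓ lam ∧
      lam (theA ℓ lam (lam b + 1)) + 1 = lam b + 1 :=
    Nat.findGreatest_spec (P := fun a => a ∈ Cfin ℓ lam ∧ lam a + 1 = lam b + 1) hble ⟨hb, rfl⟩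
  by_contra hne
  have hlt : b < theA ℓ lam (lam b + 1) := by omega
  have : lam (theA ℓ lam (lam b + 1)) < lam b := by
    -- strict anti on Cfin
    have haℓ : b ≠ ℓ := by
      have := (mem_Cfin.1 hspec.1).2.1
      omega
    have h1 : lam (b+1) < lam b := (mem_Cfin.1 hb).2.2.resolve_left haℓ
    have h2 : lam (theA ℓ lam (lam b + 1)) ≤ lam (b+1) :=
      hA (b+1) _ (by omega) (by omega) (mem_Cfin.1 hspec.1).2.1
    omega
  omega


end Basic


section Graph

variable (ℓ : ℕ) (lam : ℕ → ℕ) (m : ℕ)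

/-- coercion of a natural number into `Fin m`. -/
def vF (hm0 : 0 < m) (t : ℕ) : Fin m := ⟨t % m, Nat.mod_lt _ hm0⟩

/-- The tree `T(π)` as a simple graph on `Fin m`. -/
def TT : SimpleGraph (Fin m) := SimpleGraph.fromRel fun x y => ER ℓ lam (x : ℕ) (y : ℕ)

variable {ℓ lam m}

lemma vF_val {hm0 : 0 < m} {t : ℕ} (h : t < m) : ((vF m hm0 t : Fin m) : ℕ) = t :=
  Nat.mod_eq_of_lt h

lemma ER_facts (hℓ : 1 ≤ ℓ) {p q : ℕ} (h : ER ℓ lam p q) :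
    p < q ∧ p ≤ ℓ ∧ q ≤ ℓ + (Freef ℓ lam).card := by
  rcases h with ⟨hp, hq⟩ | ⟨j, hj, hp, hq⟩
  · have h1 := nx_spec (lam := lam) hℓ hp
    have h2 := nx_le_top (lam := lam) hℓ hp
    subst hq
    exact ⟨h1.2, by omega, by omega⟩
  · have h1 : att ℓ lam j ≤ ℓ := att_le
    have h2 := Fb_lt_card hj
    subst hp hq
    exact ⟨by omega, h1, by omega⟩

lemma TT_adj_iff {a b : Fin m} (hℓ : 1 ≤ ℓ) :
    (TT ℓ lam m).Adj a b ↔ ER ℓ lam (a : ℕ) (b : ℕ) ∨ ER ℓ lam (b : ℕ) (a : ℕ) := by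
  rw [TT, SimpleGraph.fromRel_adj]
  constructor
  · exact fun h => h.2
  · intro h
    refine ⟨?_, h⟩
    rcases h with h | h
    · have := (ER_facts hℓ h).1
      intro hab; rw [hab] at this; omega
    · have := (ER_facts hℓ h).1
      intro hab; rw [hab] at this; omega

lemma reach_pred {V : Type*} {H : SimpleGraph V} (P : V → Prop)
    (h : ∀ a b, H.Adj a b → (P a ↔ P b)) {u v : V} (hr : H.Reachable u v) : P u ↔ P v := by
  obtain ⟨p⟩ := hr
  induction p with
  | nil => rfl
  | cons ha _ ih => exact (h _ _ ha).trans ih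

section Conn

lemma hm0 (hm1 : m = ℓ + 1 + (Freef ℓ lam).card) : 0 < m := by omega

lemma reach_row (hℓ : 1 ≤ ℓ) (hm1 : m = ℓ + 1 + (Freef ℓ lam).card) :
    ∀ (d x : ℕ), x ≤ ℓ → ℓ - x ≤ d →
      (TT ℓ lam m).Reachable (vF m (hm0 hm1) x) (vF m (hm0 hm1) ℓ) := by
  intro d
  induction d with
  | zero =>
    intro x hx hd
    have : x = ℓ := by omega
    subst this; rfl
  | succ d ih =>
    intro x hx hd
    by_cases hxe : x = ℓ
    · subst hxe; rfl
    · have hxl : x < ℓ := by omega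
      have hnx := nx_spec (lam := lam) hℓ hxl
      have hnxle := nx_le_top (lam := lam) hℓ hxl
      have hadj : (TT ℓ lam m).Adj (vF m (hm0 hm1) x) (vF m (hm0 hm1) (nx ℓ lam x)) := by
        rw [TT_adj_iff hℓ]
        left
        rw [vF_val (by omega), vF_val (by omega)]
        exact Or.inl ⟨hxl, rfl⟩
      exact hadj.reachable.trans (ih (nx ℓ lam x) hnxle (by omega))

lemma preconn (hℓ : 1 ≤ ℓ) (hm1 : m = ℓ + 1 + (Freef ℓ lam).card) :
    ∀ x : Fin m, (TT ℓ lam m).Reachable x (vF m (hm0 hm1) ℓ) := by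
  intro x
  by_cases hx : (x : ℕ) ≤ ℓ
  · have : x = vF m (hm0 hm1) (x : ℕ) := by
      apply Fin.ext; rw [vF_val (by omega)]
    rw [this]
    exact reach_row hℓ hm1 (ℓ - (x : ℕ)) _ hx le_rfl
  · push_neg at hx
    have hxm : (x : ℕ) < m := x.isLt
    have ht : (x : ℕ) - ℓ - 1 < (Freef ℓ lam).card := by omega
    obtain ⟨j, hj, hFb⟩ := Fb_surj ht
    have hxval : (x : ℕ) = ℓ + 1 + Fb ℓ lam j := by omega
    have hattle : att ℓ lam j ≤ ℓ := att_le
    have hadj : (TT ℓ lam m).Adj (vF m (hm0 hm1) (att ℓ lam j)) x := by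
      rw [TT_adj_iff hℓ]
      left
      rw [vF_val (by omega)]
      exact Or.inr ⟨j, hj, rfl, hxval⟩
    exact hadj.symm.reachable.trans (reach_row hℓ hm1 ℓ _ hattle (by omega))

lemma TT_connected (hℓ : 1 ≤ ℓ) (hm1 : m = ℓ + 1 + (Freef ℓ lam).card) :
    (TT ℓ lam m).Connected := by
  rw [SimpleGraph.connected_iff]
  refine ⟨fun u v => (preconn hℓ hm1 u).trans (preconn hℓ hm1 v).symm, ⟨vF m (hm0 hm1) 0⟩⟩

end Conn

end Graph

section Acyclic

variable {ℓ : ℕ} {lam : ℕ → ℕ} {m : ℕ}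

/-- no edge other than `s(v,w)` leaves the "subtree side" predicate invariant violated. -/
lemma key_bridge (hℓ : 1 ≤ ℓ)
    (hA : ∀ i j : ℕ, 1 ≤ i → i ≤ j → j ≤ ℓ → lam j ≤ lam i)
    (v w : Fin m) (hvw : ER ℓ lam (v : ℕ) (w : ℕ)) :
    ¬((TT ℓ lam m \ SimpleGraph.fromEdgeSet {s(v, w)}).Reachable v w) := by
  intro hr
  -- decompose the deleted-edge graph adjacency
  have hadj' : ∀ a b : Fin m,
      (TT ℓ lam m \ SimpleGraph.fromEdgeSet {s(v, w)}).Adj a b →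
      (ER ℓ lam (a : ℕ) (b : ℕ) ∨ ER ℓ lam (b : ℕ) (a : ℕ)) ∧ s(a, b) ≠ s(v, w) := by
    intro a b hab
    rw [SimpleGraph.sdiff_adj, SimpleGraph.fromEdgeSet_adj] at hab
    refine ⟨(TT_adj_iff hℓ).1 hab.1, ?_⟩
    intro h
    exact hab.2 ⟨by simpa using h, hab.1.ne⟩
  rcases hvw with ⟨hv, hw⟩ | ⟨j, hj, hv, hw⟩
  · -- spine edge (v, nx v)
    have hwC : (w : ℕ) ∈ Cfin ℓ lam := hw ▸ (nx_spec hℓ hv).1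
    have hvltw : (v : ℕ) < (w : ℕ) := hw ▸ (nx_spec hℓ hv).2
    have hwle : (w : ℕ) ≤ ℓ := hw ▸ nx_le_top hℓ hv
    by_cases hvC : (v : ℕ) ∈ Cfin ℓ lam
    · -- v is a corner: use the "at most v" predicate
      set P : Fin m → Prop := fun z =>
        ((z : ℕ) ≤ ℓ ∧ nxc ℓ lam (z : ℕ) ≤ (v : ℕ)) ∨
        (∃ j' ∈ Freef ℓ lam, (z : ℕ) = ℓ + 1 + Fb ℓ lam j' ∧ att ℓ lam j' ≤ (v : ℕ)) with hP
      have hinv : ∀ a b : Fin m, ER ℓ lam (a : ℕ) (b : ℕ) → s(a, b) ≠ s(v, w) →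
          (P a ↔ P b) := by
        intro a b hER hne
        rcases hER with ⟨ha, hb⟩ | ⟨j', hj', ha, hb⟩
        · -- spine-type edge (a, nx a)
          have hbC : (b : ℕ) ∈ Cfin ℓ lam := hb ▸ (nx_spec hℓ ha).1
          have hab : (a : ℕ) < (b : ℕ) := hb ▸ (nx_spec hℓ ha).2
          have hble : (b : ℕ) ≤ ℓ := hb ▸ nx_le_top hℓ ha
          have hPb : P b ↔ (b : ℕ) ≤ (v : ℕ) := by
            rw [hP]
            constructor
            · rintro (⟨h1, h2⟩ | ⟨j', hj', h1, h2⟩)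
              · rwa [nxc_self hbC] at h2
              · have := Fb_lt_card hj'; omega
            · intro h
              exact Or.inl ⟨hble, by rwa [nxc_self hbC]⟩
          have hPa : P a ↔ nxc ℓ lam (a : ℕ) ≤ (v : ℕ) := by
            rw [hP]
            constructor
            · rintro (⟨h1, h2⟩ | ⟨j', hj', h1, h2⟩)
              · exact h2
              · have := Fb_lt_card hj'; omega
            · intro h
              exact Or.inl ⟨by omega, h⟩
          rw [hPa, hPb]
          constructor
          · intro h
            by_cases haC : (a : ℕ) ∈ Cfin ℓ lam
            · rw [nxc_self haC] at h
              have hav : (a : ℕ) ≠ (v : ℕ) := by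
                intro heq
                apply hne
                have h1 : a = v := Fin.ext heq
                have h2 : b = w := Fin.ext (by rw [hb, hw, heq])
                rw [h1, h2]
              have : (a : ℕ) < (v : ℕ) := by omega
              rw [hb]
              exact nx_min hℓ ha hvC this
            · rw [nxc_of_not_mem haC] at h
              omega
          · intro h
            have : nxc ℓ lam (a : ℕ) ≤ nx ℓ lam (a : ℕ) := by
              by_cases haC : (a : ℕ) ∈ Cfin ℓ lam
              · rw [nxc_self haC]
                exact le_of_lt (nx_spec hℓ ha).2
              · rw [nxc_of_not_mem haC]
            omega
        · -- leaf-column edge (att j', wlab j')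
          have hj'2 : j' ≤ lam 1 + 1 := (mem_Freef.1 hj').1.2
          have hattC : att ℓ lam j' ∈ Cfin ℓ lam := att_mem_Cfin hℓ hj'2
          have hattle : att ℓ lam j' ≤ ℓ := att_le
          have hPa : P a ↔ att ℓ lam j' ≤ (v : ℕ) := by
            rw [hP]
            constructor
            · rintro (⟨h1, h2⟩ | ⟨j'', hj'', h1, h2⟩)
              · rwa [ha, nxc_self hattC] at h2
              · have := Fb_lt_card hj''; omega
            · intro h
              exact Or.inl ⟨by omega, by rwa [ha, nxc_self hattC]⟩
          have hPb : P b ↔ att ℓ lam j' ≤ (v : ℕ) := by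
            rw [hP]
            constructor
            · rintro (⟨h1, h2⟩ | ⟨j'', hj'', h1, h2⟩)
              · omega
              · have he : j'' = j' := Fb_injOn hj'' hj' (by omega)
                rw [he] at h2
                exact h2
            · intro h
              exact Or.inr ⟨j', hj', hb, h⟩
          rw [hPa, hPb]
      have hPvw := reach_pred P (by
        intro a b hab
        obtain ⟨hER, hne⟩ := hadj' a b hab
        rcases hER with h | h
        · exact hinv a b h hne
        · exact (hinv b a h (by rwa [Sym2.eq_swap])).symm) hr
      have hPv : P v := Or.inl ⟨by omega, by rw [nxc_self hvC]⟩
      have hPw : ¬P w := by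
        rintro (⟨h1, h2⟩ | ⟨j', hj', h1, h2⟩)
        · rw [nxc_self hwC] at h2; omega
        · have := Fb_lt_card hj'; omega
      exact hPw (hPvw.1 hPv)
    · -- v is not a corner: v is a leaf
      have hnotv : ∀ a b : Fin m, ER ℓ lam (a : ℕ) (b : ℕ) → s(a, b) ≠ s(v, w) →
          a ≠ v ∧ b ≠ v := by
        intro a b hER hne
        constructor
        · intro rfl_a
          rcases hER with ⟨ha, hb⟩ | ⟨j', hj', ha, hb⟩
          · -- a = v, spine edge: forces b = w
            apply hne
            have h2 : b = w := Fin.ext (by rw [hb, hw, rfl_a])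
            rw [rfl_a, h2]
          · -- a = v = att j' ∈ Cfin, contradiction
            subst rfl_a
            exact hvC (by rw [ha]; exact att_mem_Cfin hℓ (mem_Freef.1 hj').1.2)
        · intro rfl_b
          rcases hER with ⟨ha, hb⟩ | ⟨j', hj', ha, hb⟩
          · -- b = v = nx a ∈ Cfin, contradiction
            subst rfl_b
            exact hvC (by rw [hb]; exact (nx_spec hℓ ha).1)
          · -- b = v has value > ℓ, contradiction
            subst rfl_b
            omega
      have hPvw := reach_pred (fun z => z = v) (by
        intro a b hab
        obtain ⟨hER, hne⟩ := hadj' a b hab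
        rcases hER with h | h
        · have := hnotv a b h hne
          simp only [this.1, this.2]
        · have := hnotv b a h (by rwa [Sym2.eq_swap])
          simp only [this.1, this.2]) hr
      have : w = v := hPvw.1 rfl
      rw [this] at hvltw
      omega
  · -- leaf-column edge (v, w) = (att j, wlab j)
    have hnotw : ∀ a b : Fin m, ER ℓ lam (a : ℕ) (b : ℕ) → s(a, b) ≠ s(v, w) →
        a ≠ w ∧ b ≠ w := by
      intro a b hER hne
      have hwval : (w : ℕ) = ℓ + 1 + Fb ℓ lam j := hw
      constructor
      · intro rfl_a
        have h1 := (ER_facts hℓ hER).2.1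
        rw [rfl_a] at h1
        omega
      · intro rfl_b
        subst rfl_b
        rcases hER with ⟨ha, hb⟩ | ⟨j', hj', ha, hb⟩
        · have hble := nx_le_top (lam := lam) hℓ ha
          omega
        · have hjj : j' = j := Fb_injOn hj' hj (by omega)
          subst hjj
          apply hne
          have h1 : a = v := Fin.ext (by rw [ha, hv])
          rw [h1]
    have hPvw := reach_pred (fun z => z = w) (by
      intro a b hab
      obtain ⟨hER, hne⟩ := hadj' a b hab
      rcases hER with h | h
      · have := hnotw a b h hne
        simp only [this.1, this.2]
      · have := hnotw b a h (by rwa [Sym2.eq_swap])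
        simp only [this.1, this.2]) hr
    have hvltw : (v : ℕ) < (w : ℕ) := (ER_facts hℓ (Or.inr ⟨j, hj, hv, hw⟩)).1
    have : v = w := hPvw.2 rfl
    rw [this] at hvltw
    omega

lemma TT_isTree (hℓ : 1 ≤ ℓ)
    (hA : ∀ i j : ℕ, 1 ≤ i → i ≤ j → j ≤ ℓ → lam j ≤ lam i)
    (hm1 : m = ℓ + 1 + (Freef ℓ lam).card) :
    (TT ℓ lam m).IsTree := by
  constructor
  · exact TT_connected hℓ hm1
  · rw [SimpleGraph.isAcyclic_iff_forall_adj_isBridge]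
    intro v w hadj
    rcases (TT_adj_iff hℓ).1 hadj with h | h
    · exact key_bridge hℓ hA v w h
    · rw [Sym2.eq_swap]
      exact fun hre => key_bridge hℓ hA w v h hre

end Acyclic

section Cone

variable {ℓ : ℕ} {lam : ℕ → ℕ} {m : ℕ}

/-- membership in the cone part of the root polytope of `TT`. -/
def InCone (ℓ : ℕ) (lam : ℕ → ℕ) (m : ℕ) (v : Fin m → ℝ) : Prop :=
  ∃ cf : Fin m × Fin m → ℝ, (∀ e, 0 ≤ cf e) ∧
    (∀ e : Fin m × Fin m, ¬(e.1 < e.2 ∧ (TT ℓ lam m).Adj e.1 e.2) → cf e = 0) ∧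
    v = ∑ e : Fin m × Fin m, cf e • evec m e.1 e.2

lemma evec_trans {a b c : Fin m} : evec m a b + evec m b c = evec m a c := by
  funext t
  simp only [evec, Pi.add_apply]
  ring

lemma InCone_add {v v' : Fin m → ℝ} (h : InCone ℓ lam m v) (h' : InCone ℓ lam m v') :
    InCone ℓ lam m (v + v') := by
  obtain ⟨cf, h1, h2, h3⟩ := h
  obtain ⟨cf', h1', h2', h3'⟩ := h'
  refine ⟨cf + cf', fun e => by have := h1 e; have := h1' e; simp [Pi.add_apply]; positivity, ?_, ?_⟩
  · intro e he
    simp [Pi.add_apply, h2 e he, h2' e he]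
  · rw [h3, h3', ← Finset.sum_add_distrib]
    congr 1
    funext e
    simp [add_smul]

lemma InCone_single (hℓ : 1 ≤ ℓ) {p q : ℕ} (h : ER ℓ lam p q) (hp : p < m) (hq : q < m) :
    InCone ℓ lam m (evec m ⟨p, hp⟩ ⟨q, hq⟩) := by
  classical
  set E0 : Fin m × Fin m := (⟨p, hp⟩, ⟨q, hq⟩) with hE0
  refine ⟨fun e => if e = E0 then 1 else 0, fun e => by positivity, ?_, ?_⟩
  · intro e he
    by_cases heq : e = E0
    · exfalso
      subst heq
      apply he
      constructor
      · simp only [hE0, Fin.lt_def]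
        exact (ER_facts hℓ h).1
      · rw [TT_adj_iff hℓ]
        left
        simpa using h
    · simp [heq]
  · rw [Finset.sum_eq_single E0]
    · simp [hE0]
    · intro e _ hne
      simp [hne]
    · intro habs
      exact absurd (Finset.mem_univ E0) habs

lemma InCone_corner_path (hℓ : 1 ≤ ℓ) (hm1 : m = ℓ + 1 + (Freef ℓ lam).card) :
    ∀ (N p b : ℕ) (hN : b - p ≤ N) (hpb : p < b) (hbC : b ∈ Cfin ℓ lam),
      InCone ℓ lam m (evec m ⟨p, by have := (mem_Cfin.1 hbC).2.1; omega⟩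
        ⟨b, by have := (mem_Cfin.1 hbC).2.1; omega⟩) := by
  intro N
  induction N with
  | zero => intro p b h1 h2 _; omega
  | succ N ih =>
    intro p b h1 h2 hbC
    have hble : b ≤ ℓ := (mem_Cfin.1 hbC).2.1
    have hpl : p < ℓ := by omega
    have hnx := nx_spec (lam := lam) hℓ hpl
    have hnxb : nx ℓ lam p ≤ b := nx_min hℓ hpl hbC h2
    have hnxle : nx ℓ lam p ≤ ℓ := nx_le_top hℓ hpl
    by_cases hc : nx ℓ lam p = b
    · subst hc
      exact InCone_single hℓ (Or.inl ⟨hpl, rfl⟩) (by omega) (by omega)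
    · have hlt : nx ℓ lam p < b := by omega
      have h5 : InCone ℓ lam m (evec m ⟨p, by omega⟩ ⟨nx ℓ lam p, by omega⟩) :=
        InCone_single hℓ (Or.inl ⟨hpl, rfl⟩) (by omega) (by omega)
      have h6 := ih (nx ℓ lam p) b (by omega) hlt hbC
      have := InCone_add h5 h6
      rwa [evec_trans] at this

lemma InCone_of_Rset (hℓ : 1 ≤ ℓ) (hm1 : m = ℓ + 1 + (Freef ℓ lam).card)
    {p q : ℕ} (h : RsetN ℓ lam p q) (hp : p < m) (hq : q < m) :
    InCone ℓ lam m (evec m ⟨p, hp⟩ ⟨q, hq⟩) := by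
  obtain ⟨hpq, hpl, hcase⟩ := h
  rcases hcase with hqC | ⟨j, hj, hq2, hpa⟩
  · have := InCone_corner_path hℓ hm1 (q - p) p q le_rfl hpq hqC
    convert this using 2
  · have hj2 : j ≤ lam 1 + 1 := (mem_Freef.1 hj).1.2
    have hattle : att ℓ lam j ≤ ℓ := att_le
    by_cases hpe : p = att ℓ lam j
    · have := InCone_single (m := m) hℓ (Or.inr ⟨j, hj, hpe, hq2⟩) hp hq
      exact this
    · have hplt : p < att ℓ lam j := by omega
      have h5 := InCone_corner_path hℓ hm1 (att ℓ lam j - p) p (att ℓ lam j) le_rfl hplt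
        (att_mem_Cfin hℓ hj2)
      have h6 : InCone ℓ lam m (evec m ⟨att ℓ lam j, by omega⟩ ⟨q, hq⟩) :=
        InCone_single hℓ (Or.inr ⟨j, hj, rfl, hq2⟩) (by omega) hq
      have := InCone_add h5 h6
      rwa [evec_trans] at this

end Cone

section Hard

variable {ℓ : ℕ} {lam : ℕ → ℕ} {m : ℕ}

lemma Rset_of_InCone (hℓ : 1 ≤ ℓ) (hm1 : m = ℓ + 1 + (Freef ℓ lam).card)
    {a b : Fin m} (hab : a < b) (h : InCone ℓ lam m (evec m a b)) :
    RsetN ℓ lam (a : ℕ) (b : ℕ) := by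
  classical
  obtain ⟨cf, hpos, hsupp, hsum⟩ := h
  have habv : (a : ℕ) < (b : ℕ) := hab
  have hne : a ≠ b := Fin.ne_of_lt hab
  have hneb : b ≠ a := Fin.ne_of_gt hab
  have hER : ∀ e : Fin m × Fin m, cf e ≠ 0 → ER ℓ lam (e.1 : ℕ) (e.2 : ℕ) := by
    intro e he
    have hc : e.1 < e.2 ∧ (TT ℓ lam m).Adj e.1 e.2 := by
      by_contra hh
      exact he (hsupp e hh)
    rcases (TT_adj_iff hℓ).1 hc.2 with h' | h'
    · exact h'
    · exfalso
      have h1 := (ER_facts hℓ h').1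
      have h12 : (e.1 : ℕ) < (e.2 : ℕ) := hc.1
      omega
  have hcoord : ∀ t : Fin m, evec m a b t = ∑ e : Fin m × Fin m, cf e * evec m e.1 e.2 t := by
    intro t
    rw [congrFun hsum t, Finset.sum_apply]
    apply Finset.sum_congr rfl
    intro e _
    simp
  have haval : (a : ℕ) ≤ ℓ := by
    by_contra hgt
    push_neg at hgt
    have h1 : evec m a b a = 1 := by simp [evec, hne]
    have h2 : (∑ e : Fin m × Fin m, cf e * evec m e.1 e.2 a) ≤ 0 := by
      apply Finset.sum_nonpos
      intro e _
      by_cases hce : cf e = 0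
      · simp [hce]
      · have hfacts := ER_facts hℓ (hER e hce)
        have hna : a ≠ e.1 := by
          intro heq
          have : (a : ℕ) = ((e.1 : Fin m) : ℕ) := by rw [heq]
          omega
        have hev : evec m e.1 e.2 a = (if a = e.1 then 1 else 0) - (if a = e.2 then 1 else 0) := rfl
        rw [hev, if_neg hna]
        have h0 := hpos e
        by_cases h2 : a = e.2 <;> simp [h2] <;> nlinarith
    rw [hcoord a] at h1
    linarith
  have hbcase : ((b : ℕ) ∈ Cfin ℓ lam) ∨ ∃ j ∈ Freef ℓ lam, (b : ℕ) = ℓ + 1 + Fb ℓ lam j := by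
    by_contra hcon
    push_neg at hcon
    have h1 : evec m a b b = -1 := by simp [evec, hneb]
    have h2 : (0:ℝ) ≤ ∑ e : Fin m × Fin m, cf e * evec m e.1 e.2 b := by
      apply Finset.sum_nonneg
      intro e _
      by_cases hce : cf e = 0
      · simp [hce]
      · have hERe := hER e hce
        have hnb : b ≠ e.2 := by
          intro heq
          rcases hERe with ⟨h3, h4⟩ | ⟨j, hj, h3, h4⟩
          · apply hcon.1
            rw [heq]
            exact h4 ▸ (nx_spec hℓ h3).1
          · exact (hcon.2 j hj) (by rw [heq]; exact h4)
        have hev : evec m e.1 e.2 b = (if b = e.1 then 1 else 0) - (if b = e.2 then 1 else 0) := rfl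
        rw [hev, if_neg hnb]
        have h0 := hpos e
        by_cases h2 : b = e.1 <;> simp [h2] <;> nlinarith
    rw [hcoord b] at h1
    linarith
  rcases hbcase with hbC | ⟨j, hj, hbval⟩
  · exact ⟨habv, haval, Or.inl hbC⟩
  · have hj2 : j ≤ lam 1 + 1 := (mem_Freef.1 hj).1.2
    set s := att ℓ lam j with hs
    have hsC : s ∈ Cfin ℓ lam := att_mem_Cfin hℓ hj2
    have hsle : s ≤ ℓ := att_le
    set Sf : Finset (Fin m) := Finset.univ.filter (fun z : Fin m =>
      ((z : ℕ) ≤ ℓ ∧ nxc ℓ lam (z : ℕ) ≤ s) ∨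
      (∃ j' ∈ Freef ℓ lam, (z : ℕ) = ℓ + 1 + Fb ℓ lam j' ∧ att ℓ lam j' ≤ s)) with hSf
    have hbS : b ∈ Sf := by
      rw [hSf, Finset.mem_filter]
      exact ⟨Finset.mem_univ _, Or.inr ⟨j, hj, hbval, le_rfl⟩⟩
    have hsplit : ∀ (x y : Fin m), ∑ t ∈ Sf, evec m x y t =
        (if x ∈ Sf then (1:ℝ) else 0) - (if y ∈ Sf then (1:ℝ) else 0) := by
      intro x y
      have h3 : ∑ t ∈ Sf, evec m x y t =
          (∑ t ∈ Sf, if t = x then (1:ℝ) else 0) - (∑ t ∈ Sf, if t = y then (1:ℝ) else 0) := by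
        rw [← Finset.sum_sub_distrib]
        apply Finset.sum_congr rfl
        intro t _
        simp [evec]
      rw [h3, Finset.sum_ite_eq' Sf x (fun _ => (1:ℝ)), Finset.sum_ite_eq' Sf y (fun _ => (1:ℝ))]
    have hR : ∑ t ∈ Sf, evec m a b t =
        ∑ e : Fin m × Fin m, cf e *
          ((if e.1 ∈ Sf then (1:ℝ) else 0) - (if e.2 ∈ Sf then (1:ℝ) else 0)) := by
      calc ∑ t ∈ Sf, evec m a b t
          = ∑ t ∈ Sf, ∑ e : Fin m × Fin m, cf e * evec m e.1 e.2 t :=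
            Finset.sum_congr rfl (fun t _ => hcoord t)
        _ = ∑ e : Fin m × Fin m, ∑ t ∈ Sf, cf e * evec m e.1 e.2 t := Finset.sum_comm
        _ = _ := by
            apply Finset.sum_congr rfl
            intro e _
            rw [← Finset.mul_sum, hsplit e.1 e.2]
    have hterm : ∀ e : Fin m × Fin m, (0:ℝ) ≤ cf e *
        ((if e.1 ∈ Sf then (1:ℝ) else 0) - (if e.2 ∈ Sf then (1:ℝ) else 0)) := by
      intro e
      by_cases hce : cf e = 0
      · simp [hce]
      · have hERe := hER e hce
        have himp : e.2 ∈ Sf → e.1 ∈ Sf := by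
          intro h2
          rw [hSf, Finset.mem_filter] at h2 ⊢
          refine ⟨Finset.mem_univ _, ?_⟩
          rcases hERe with ⟨h3, h4⟩ | ⟨j', hj', h3, h4⟩
          · have hbC2 : ((e.2 : Fin m) : ℕ) ∈ Cfin ℓ lam := h4 ▸ (nx_spec hℓ h3).1
            have he2le : ((e.2 : Fin m) : ℕ) ≤ ℓ := h4 ▸ nx_le_top hℓ h3
            rcases h2.2 with ⟨h5, h6⟩ | ⟨j'', hj'', h5, h6⟩
            · rw [nxc_self hbC2] at h6
              left
              refine ⟨by omega, ?_⟩
              have h7 : nxc ℓ lam ((e.1 : Fin m) : ℕ) ≤ nx ℓ lam ((e.1 : Fin m) : ℕ) := by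
                by_cases hm : ((e.1 : Fin m) : ℕ) ∈ Cfin ℓ lam
                · rw [nxc_self hm]
                  exact le_of_lt (nx_spec hℓ h3).2
                · rw [nxc_of_not_mem hm]
              omega
            · exfalso
              have := Fb_lt_card hj''
              omega
          · rcases h2.2 with ⟨h5, h6⟩ | ⟨j'', hj'', h5, h6⟩
            · exfalso
              have := Fb_lt_card hj'
              omega
            · have hjj : j'' = j' := Fb_injOn hj'' hj' (by omega)
              subst hjj
              left
              have hattC := att_mem_Cfin hℓ ((mem_Freef.1 hj').1.2)
              refine ⟨by rw [h3]; exact att_le, ?_⟩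
              rw [h3, nxc_self hattC]
              exact h6
        have h0 := hpos e
        by_cases h2 : e.2 ∈ Sf
        · have h1 := himp h2
          simp [h1, h2]
        · by_cases h1 : e.1 ∈ Sf
          · simp [h1, h2]
            nlinarith
          · simp [h1, h2]
    have hsum' : (0:ℝ) ≤ ∑ e : Fin m × Fin m, cf e *
        ((if e.1 ∈ Sf then (1:ℝ) else 0) - (if e.2 ∈ Sf then (1:ℝ) else 0)) :=
      Finset.sum_nonneg (fun e _ => hterm e)
    have haS : a ∈ Sf := by
      by_contra haSn
      have h7 := (hsplit a b).symm.trans hR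
      rw [if_neg haSn, if_pos hbS] at h7
      rw [← h7] at hsum'
      linarith
    rw [hSf, Finset.mem_filter] at haS
    rcases haS.2 with ⟨h5, h6⟩ | ⟨j'', hj'', h5, h6⟩
    · refine ⟨habv, haval, Or.inr ⟨j, hj, hbval, ?_⟩⟩
      have := le_nxc (lam := lam) hℓ (x := (a : ℕ)) h5
      omega
    · exfalso
      have := Fb_lt_card hj''
      omega

end Hard

section LsetComp

variable {n : ℕ} {π : Equiv.Perm ℕ} {ℓ : ℕ} {lam : ℕ → ℕ}

/-- row lengths of the region `L(π)`. -/
def mu (ℓ : ℕ) (lam : ℕ → ℕ) (i : ℕ) : ℕ := if i ≤ 1 then lam 1 + 1 else lam (i-1) + 1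

/-- explicit description of `L(π)`. -/
def LsetN (ℓ : ℕ) (lam : ℕ → ℕ) : Set (ℕ × ℕ) :=
  {p | 1 ≤ p.1 ∧ p.1 ≤ ℓ + 1 ∧ 1 ≤ p.2 ∧ p.2 ≤ mu ℓ lam p.1}

lemma one_one_notin_RD
    (hRD : RD π = {p | ∃ i j : ℕ, 1 ≤ i ∧ i ≤ ℓ ∧ 1 ≤ j ∧ j ≤ lam i ∧ p = (i + 1, j + 1)}) :
    (1, 1) ∉ RD π := by
  rw [hRD]
  rintro ⟨i, j, hi1, hi2, hj1, hj2, heq⟩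
  have := congrArg Prod.fst heq
  simp at this
  omega

lemma Lset_eq (hℓ : 1 ≤ ℓ)
    (hA : ∀ i j : ℕ, 1 ≤ i → i ≤ j → j ≤ ℓ → lam j ≤ lam i)
    (hP : ∀ i : ℕ, 1 ≤ i → i ≤ ℓ → 1 ≤ lam i)
    (hRD : RD π = {p | ∃ i j : ℕ, 1 ≤ i ∧ i ≤ ℓ ∧ 1 ≤ j ∧ j ≤ lam i ∧ p = (i + 1, j + 1)}) :
    Lset π = LsetN ℓ lam := by
  have hdom : domPiece π = ∅ := by
    ext q
    simp only [domPiece, Set.mem_setOf_eq, Set.mem_empty_iff_false, iff_false]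
    rintro ⟨h1, _⟩
    exact one_one_notin_RD hRD h1
  rw [Lset, hdom, Set.diff_empty]
  ext p
  simp only [NWset, LsetN, Set.mem_setOf_eq, hRD]
  constructor
  · rintro ⟨h1, h2, q, ⟨i, j, hi1, hi2, hj1, hj2, rfl⟩, hq1, hq2⟩
    refine ⟨h1, by omega, h2, ?_⟩
    by_cases hp1 : p.1 ≤ 1
    · rw [mu, if_pos hp1]
      have : lam i ≤ lam 1 := hA 1 i le_rfl hi1 hi2
      omega
    · rw [mu, if_neg hp1]
      have hle : p.1 - 1 ≤ i := by omega
      have : lam i ≤ lam (p.1 - 1) := hA (p.1 - 1) i (by omega) hle hi2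
      omega
  · rintro ⟨h1, h2, h3, h4⟩
    refine ⟨h1, h3, ?_⟩
    by_cases hp1 : p.1 ≤ 1
    · refine ⟨(2, lam 1 + 1), ⟨1, lam 1, le_rfl, hℓ, hP 1 le_rfl hℓ, le_rfl, rfl⟩, by omega, ?_⟩
      rw [mu, if_pos hp1] at h4
      omega
    · refine ⟨(p.1, lam (p.1 - 1) + 1),
        ⟨p.1 - 1, lam (p.1 - 1), by omega, by omega, hP (p.1 - 1) (by omega) (by omega),
          le_rfl, by simp; omega⟩, le_rfl, ?_⟩
      rw [mu, if_neg hp1] at h4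
      omega

lemma Ess_eq (hℓ : 1 ≤ ℓ)
    (hA : ∀ i j : ℕ, 1 ≤ i → i ≤ j → j ≤ ℓ → lam j ≤ lam i)
    (hP : ∀ i : ℕ, 1 ≤ i → i ≤ ℓ → 1 ≤ lam i)
    (hRD : RD π = {p | ∃ i j : ℕ, 1 ≤ i ∧ i ≤ ℓ ∧ 1 ≤ j ∧ j ≤ lam i ∧ p = (i + 1, j + 1)}) :
    EssSet π = (fun a => (a + 1, lam a + 1)) '' (Cfin ℓ lam : Set ℕ) := by
  ext p
  simp only [EssSet, Set.mem_setOf_eq, Set.mem_image, Finset.coe_sort_coe, Finset.mem_coe,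
    mem_Cfin]
  constructor
  · rintro ⟨hmem, hdown, hright⟩
    rw [hRD] at hmem
    obtain ⟨i, j, hi1, hi2, hj1, hj2, rfl⟩ := hmem
    rw [hRD] at hdown hright
    simp only [Set.mem_setOf_eq] at hdown hright
    have hjlam : j = lam i := by
      by_contra hne
      exact hright ⟨i, j + 1, hi1, hi2, by omega, by omega, by simp⟩
    refine ⟨i, ⟨hi1, hi2, ?_⟩, by simp [hjlam]⟩
    by_cases hi : i = ℓ
    · exact Or.inl hi
    · right
      by_contra hcon
      push_neg at hcon
      exact hdown ⟨i + 1, j, by omega, by omega, hj1, by omega, by simp⟩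
  · rintro ⟨a, ⟨ha1, ha2, hac⟩, rfl⟩
    refine ⟨?_, ?_, ?_⟩
    · rw [hRD]
      exact ⟨a, lam a, ha1, ha2, hP a ha1 ha2, le_rfl, rfl⟩
    · rw [hRD]
      rintro ⟨i, j, hi1, hi2, hj1, hj2, heq⟩
      simp only [Prod.mk.injEq] at heq
      have hia : i = a + 1 := by omega
      have hja : j = lam a := by omega
      subst hia hja
      rcases hac with h | h
      · omega
      · omega
    · rw [hRD]
      rintro ⟨i, j, hi1, hi2, hj1, hj2, heq⟩
      simp only [Prod.mk.injEq] at heq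
      have hia : i = a := by omega
      subst hia
      omega

lemma Ess_ncard (hℓ : 1 ≤ ℓ)
    (hA : ∀ i j : ℕ, 1 ≤ i → i ≤ j → j ≤ ℓ → lam j ≤ lam i)
    (hP : ∀ i : ℕ, 1 ≤ i → i ≤ ℓ → 1 ≤ lam i)
    (hRD : RD π = {p | ∃ i j : ℕ, 1 ≤ i ∧ i ≤ ℓ ∧ 1 ≤ j ∧ j ≤ lam i ∧ p = (i + 1, j + 1)}) :
    (EssSet π).ncard = (Cfin ℓ lam).card := by
  rw [Ess_eq hℓ hA hP hRD]
  rw [Set.ncard_image_of_injective _ (fun a b hab => by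
    simpa using congrArg Prod.fst hab)]
  exact Set.ncard_coe_finset _

end LsetComp

section Image

variable {ℓ : ℕ} {lam : ℕ → ℕ} {m : ℕ}

/-- the indicator vector of coordinate `t` (as a natural number). -/
def eps (m : ℕ) (t : ℕ) : Fin m → ℝ := fun z => if (z : ℕ) = t then 1 else 0

/-- image of a box under the degeneration map. -/
def boxv (ℓ : ℕ) (lam : ℕ → ℕ) (m : ℕ) (p : ℕ × ℕ) : Fin m → ℝ :=
  eps m (p.1 - 1) - eps m (wl ℓ lam p.2)

/-- the admissible root vectors. -/
def Rvec (ℓ : ℕ) (lam : ℕ → ℕ) (m : ℕ) : Set (Fin m → ℝ) :=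
  {v | ∃ a b : Fin m, RsetN ℓ lam (a : ℕ) (b : ℕ) ∧ v = evec m a b}

lemma eps_sub_eq_evec {p q : ℕ} (hp : p < m) (hq : q < m) :
    eps m p - eps m q = evec m ⟨p, hp⟩ ⟨q, hq⟩ := by
  funext z
  simp [eps, evec, Fin.ext_iff]

lemma evec_eq_eps (a b : Fin m) : evec m a b = eps m (a : ℕ) - eps m (b : ℕ) := by
  exact (eps_sub_eq_evec a.isLt b.isLt).symm

lemma wl_free {j : ℕ} (hj : j ∈ Freef ℓ lam) : wl ℓ lam j = ℓ + 1 + Fb ℓ lam j := by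
  rw [wl, if_neg]
  exact (mem_Freef.1 hj).2

lemma wl_corner (hℓ : 1 ≤ ℓ)
    (hA : ∀ i j : ℕ, 1 ≤ i → i ≤ j → j ≤ ℓ → lam j ≤ lam i)
    {a : ℕ} (ha : a ∈ Cfin ℓ lam) : wl ℓ lam (lam a + 1) = a := by
  rw [wl, if_pos ⟨a, ha, rfl⟩]
  exact theA_eq hℓ hA ha

lemma mu_le (hℓ : 1 ≤ ℓ)
    (hA : ∀ i j : ℕ, 1 ≤ i → i ≤ j → j ≤ ℓ → lam j ≤ lam i)
    {i : ℕ} (hi : i ≤ ℓ + 1) : mu ℓ lam i ≤ lam 1 + 1 := by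
  rw [mu]
  by_cases h : i ≤ 1
  · rw [if_pos h]
  · rw [if_neg h]
    have := hA 1 (i - 1) le_rfl (by omega) (by omega)
    omega

/-- Goal A: the image of the boxes of `L` is `{0} ∪ Rvec`. -/
lemma image_boxv (hℓ : 1 ≤ ℓ)
    (hA : ∀ i j : ℕ, 1 ≤ i → i ≤ j → j ≤ ℓ → lam j ≤ lam i)
    (hP : ∀ i : ℕ, 1 ≤ i → i ≤ ℓ → 1 ≤ lam i)
    (hm1 : m = ℓ + 1 + (Freef ℓ lam).card) :
    boxv ℓ lam m '' LsetN ℓ lam = {0} ∪ Rvec ℓ lam m := by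
  apply Set.eq_of_subset_of_subset
  · rintro v ⟨⟨i, j⟩, ⟨h1, h2, h3, h4⟩, rfl⟩
    simp only [LsetN, Set.mem_setOf_eq] at h1 h2 h3 h4
    have hjle : j ≤ lam 1 + 1 := le_trans h4 (mu_le hℓ hA h2)
    by_cases hid : ∃ a ∈ Cfin ℓ lam, lam a + 1 = j
    · obtain ⟨a, haC, haj⟩ := hid
      have hwl : wl ℓ lam j = a := by rw [← haj]; exact wl_corner hℓ hA haC
      have ha1 : 1 ≤ a := (mem_Cfin.1 haC).1
      have ha2 : a ≤ ℓ := (mem_Cfin.1 haC).2.1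
      by_cases hia : i - 1 = a
      · left
        simp only [boxv, Set.mem_singleton_iff]
        rw [hwl, ← hia]
        simp
      · right
        have hlt : i - 1 < a := by
          by_contra hcon
          push_neg at hcon
          have hgt : a < i - 1 := by omega
          have hi2 : ¬(i ≤ 1) := by omega
          rw [mu, if_neg hi2] at h4
          have hle1 : lam (i - 1) ≤ lam (a + 1) := hA (a+1) (i-1) (by omega) (by omega) (by omega)
          have haℓ : a ≠ ℓ := by omega
          have := (mem_Cfin.1 haC).2.2.resolve_left haℓ
          omega
        refine ⟨⟨i - 1, by omega⟩, ⟨a, by omega⟩,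
          ⟨by show i - 1 < a; omega, by show i - 1 ≤ ℓ; omega, Or.inl (by show a ∈ _; exact haC)⟩, ?_⟩
        show eps m (i - 1) - eps m (wl ℓ lam j) = _
        rw [hwl]
        exact eps_sub_eq_evec _ _
    · have hjF : j ∈ Freef ℓ lam := by
        rw [mem_Freef]
        exact ⟨⟨h3, hjle⟩, hid⟩
      have hwl : wl ℓ lam j = ℓ + 1 + Fb ℓ lam j := wl_free hjF
      have hFb := Fb_lt_card hjF
      right
      have hatt : i - 1 ≤ att ℓ lam j := by
        by_cases hi1 : i ≤ 1
        · omega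
        · apply le_att (by omega) (by omega)
          rw [mu, if_neg hi1] at h4
          omega
      refine ⟨⟨i - 1, by omega⟩, ⟨ℓ + 1 + Fb ℓ lam j, by omega⟩,
        ⟨by show i - 1 < ℓ + 1 + Fb ℓ lam j; omega, by show i - 1 ≤ ℓ; omega,
          Or.inr ⟨j, hjF, by show ℓ + 1 + Fb ℓ lam j = _; rfl, by show i - 1 ≤ _; exact hatt⟩⟩, ?_⟩
      show eps m (i - 1) - eps m (wl ℓ lam j) = _
      simp only [hwl]
      exact eps_sub_eq_evec _ _
  · rintro v (hv | ⟨a, b, ⟨hab, hale, hcase⟩, rfl⟩)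
    · refine ⟨(ℓ + 1, lam ℓ + 1), ?_, ?_⟩
      · refine ⟨by omega, le_rfl, by have := hP ℓ hℓ le_rfl; omega, ?_⟩
        rw [mu, if_neg (by omega)]
        simp
      · simp only [Set.mem_singleton_iff] at hv
        rw [hv, boxv]
        simp only []
        rw [wl_corner hℓ hA (top_mem_Cfin hℓ)]
        simp
    · rcases hcase with hbC | ⟨j, hj, hbval, hatt⟩
      · have hb1 : 1 ≤ (b : ℕ) := (mem_Cfin.1 hbC).1
        have hb2 : (b : ℕ) ≤ ℓ := (mem_Cfin.1 hbC).2.1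
        refine ⟨((a : ℕ) + 1, lam (b : ℕ) + 1), ?_, ?_⟩
        · refine ⟨by omega, by omega, by omega, ?_⟩
          rw [mu]
          by_cases h : (a : ℕ) + 1 ≤ 1
          · rw [if_pos h]
            have := hA 1 (b : ℕ) le_rfl hb1 hb2
            omega
          · rw [if_neg h]
            have h7 : lam (b : ℕ) ≤ lam ((a : ℕ)) := by
              apply hA _ _ (by omega) (by omega) (by omega)
            simp only [Nat.add_sub_cancel]
            omega
        · rw [boxv]
          simp only [Nat.add_sub_cancel]
          rw [wl_corner hℓ hA hbC]
          rw [evec_eq_eps]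
      · have hj1 : 1 ≤ j := (mem_Freef.1 hj).1.1
        have hj2 : j ≤ lam 1 + 1 := (mem_Freef.1 hj).1.2
        have hattle : att ℓ lam j ≤ ℓ := att_le
        refine ⟨((a : ℕ) + 1, j), ?_, ?_⟩
        · refine ⟨by omega, by omega, hj1, ?_⟩
          rw [mu]
          by_cases h : (a : ℕ) + 1 ≤ 1
          · rw [if_pos h]
            exact hj2
          · rw [if_neg h]
            have h5 := att_spec hℓ hj2
            have h6 : lam (att ℓ lam j) ≤ lam ((a : ℕ)) :=
              hA _ _ (by omega) hatt hattle
            simp only [Nat.add_sub_cancel]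
            omega
        · rw [boxv]
          simp only [Nat.add_sub_cancel]
          rw [wl_free hj, ← hbval, evec_eq_eps]

end Image

section Poly

variable {ℓ : ℕ} {lam : ℕ → ℕ} {m : ℕ}

lemma coneSet_eq_Rvec (hℓ : 1 ≤ ℓ) (hm1 : m = ℓ + 1 + (Freef ℓ lam).card) :
    {v : Fin m → ℝ | ∃ a b : Fin m, a < b ∧ v = evec m a b ∧
      ∃ cf : Fin m × Fin m → ℝ, (∀ e, 0 ≤ cf e) ∧
        (∀ e : Fin m × Fin m, ¬(e.1 < e.2 ∧ (TT ℓ lam m).Adj e.1 e.2) → cf e = 0) ∧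
        v = ∑ e : Fin m × Fin m, cf e • evec m e.1 e.2} = Rvec ℓ lam m := by
  ext v
  constructor
  · rintro ⟨a, b, hab, rfl, hcf⟩
    exact ⟨a, b, Rset_of_InCone hℓ hm1 hab hcf, rfl⟩
  · rintro ⟨a, b, hR, rfl⟩
    have hab : a < b := hR.1
    refine ⟨a, b, hab, rfl, ?_⟩
    exact InCone_of_Rset hℓ hm1 hR a.isLt b.isLt

lemma rootPoly_TT (hℓ : 1 ≤ ℓ) (hm1 : m = ℓ + 1 + (Freef ℓ lam).card) :
    rootPoly (TT ℓ lam m) = convexHull ℝ ({0} ∪ Rvec ℓ lam m) := by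
  rw [rootPoly, coneSet_eq_Rvec hℓ hm1]

/-- the sum-of-coordinates functional. -/
def sumF (m : ℕ) : (Fin m → ℝ) →ₗ[ℝ] ℝ where
  toFun v := ∑ t, v t
  map_add' x y := by simp [Finset.sum_add_distrib]
  map_smul' c x := by simp [Finset.mul_sum]

lemma sumF_evec (a b : Fin m) : sumF m (evec m a b) = 0 := by
  show (∑ t : Fin m, evec m a b t) = 0
  have h : ∀ x : Fin m, (∑ t : Fin m, if t = x then (1:ℝ) else 0) = 1 := by
    intro x
    rw [Finset.sum_ite_eq' Finset.univ x (fun _ => (1:ℝ)), if_pos (Finset.mem_univ x)]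
  have : (∑ t : Fin m, evec m a b t) =
      (∑ t : Fin m, if t = a then (1:ℝ) else 0) - (∑ t : Fin m, if t = b then (1:ℝ) else 0) := by
    rw [← Finset.sum_sub_distrib]
    exact Finset.sum_congr rfl (fun t _ => by simp [evec])
  rw [this, h a, h b, sub_self]

lemma rootPoly_sub_ker (hℓ : 1 ≤ ℓ) (hm1 : m = ℓ + 1 + (Freef ℓ lam).card) :
    rootPoly (TT ℓ lam m) ⊆ (LinearMap.ker (sumF m) : Set (Fin m → ℝ)) := by
  rw [rootPoly]
  apply convexHull_min
  · rintro v (hv | ⟨a, b, _, rfl, _⟩)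
    · simp only [Set.mem_singleton_iff] at hv
      subst hv
      simp [SetLike.mem_coe]
    · simp only [SetLike.mem_coe, LinearMap.mem_ker]
      exact sumF_evec a b
  · exact (LinearMap.ker (sumF m)).convex

lemma evec_self (a : Fin m) : evec m a a = 0 := by
  funext t
  simp [evec]

lemma evec_symm (a b : Fin m) : evec m a b = -evec m b a := by
  funext t
  simp only [evec, Pi.neg_apply]
  ring

lemma edge_mem_vs (hℓ : 1 ≤ ℓ) (hm1 : m = ℓ + 1 + (Freef ℓ lam).card)
    {p q : ℕ} (hER : ER ℓ lam p q) (hp : p < m) (hq : q < m) :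
    evec m ⟨p, hp⟩ ⟨q, hq⟩ ∈ vectorSpan ℝ (rootPoly (TT ℓ lam m)) := by
  have h0 : (0 : Fin m → ℝ) ∈ rootPoly (TT ℓ lam m) :=
    subset_convexHull ℝ _ (Or.inl rfl)
  have h1 : evec m ⟨p, hp⟩ ⟨q, hq⟩ ∈ rootPoly (TT ℓ lam m) := by
    apply subset_convexHull ℝ _
    right
    refine ⟨⟨p, hp⟩, ⟨q, hq⟩, (ER_facts hℓ hER).1, rfl, ?_⟩
    exact InCone_single hℓ hER hp hq
  have := vsub_mem_vectorSpan ℝ h1 h0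
  simpa using this

lemma row_mem_vs (hℓ : 1 ≤ ℓ) (hm1 : m = ℓ + 1 + (Freef ℓ lam).card) :
    ∀ (d x : ℕ) (hx : x ≤ ℓ), ℓ - x ≤ d →
      evec m ⟨x, by omega⟩ ⟨ℓ, by omega⟩ ∈ vectorSpan ℝ (rootPoly (TT ℓ lam m)) := by
  intro d
  induction d with
  | zero =>
    intro x hx hd
    have hxe : x = ℓ := by omega
    subst hxe
    rw [evec_self]
    exact Submodule.zero_mem _
  | succ d ih =>
    intro x hx hd
    by_cases hxe : x = ℓ
    · subst hxe
      rw [evec_self]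
      exact Submodule.zero_mem _
    · have hxl : x < ℓ := by omega
      have hnx := nx_spec (lam := lam) hℓ hxl
      have hnxle := nx_le_top (lam := lam) hℓ hxl
      have h1 : evec m ⟨x, by omega⟩ ⟨nx ℓ lam x, by omega⟩ ∈
          vectorSpan ℝ (rootPoly (TT ℓ lam m)) :=
        edge_mem_vs hℓ hm1 (Or.inl ⟨hxl, rfl⟩) (by omega) (by omega)
      have h2 := ih (nx ℓ lam x) hnxle (by omega)
      have := Submodule.add_mem _ h1 h2
      rwa [evec_trans] at this

lemma all_mem_vs (hℓ : 1 ≤ ℓ) (hm1 : m = ℓ + 1 + (Freef ℓ lam).card) (z : Fin m) :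
    evec m z ⟨ℓ, by omega⟩ ∈ vectorSpan ℝ (rootPoly (TT ℓ lam m)) := by
  by_cases hz : (z : ℕ) ≤ ℓ
  · have := row_mem_vs hℓ hm1 (ℓ - (z : ℕ)) (z : ℕ) hz le_rfl
    have hze : (⟨(z : ℕ), by omega⟩ : Fin m) = z := Fin.eta _ _
    rwa [hze] at this
  · push_neg at hz
    have hzm : (z : ℕ) < m := z.isLt
    have ht : (z : ℕ) - ℓ - 1 < (Freef ℓ lam).card := by omega
    obtain ⟨j, hj, hFb⟩ := Fb_surj ht
    have hzval : (z : ℕ) = ℓ + 1 + Fb ℓ lam j := by omega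
    have hattle : att ℓ lam j ≤ ℓ := att_le
    have h1 : evec m ⟨att ℓ lam j, by omega⟩ ⟨(z : ℕ), by omega⟩ ∈
        vectorSpan ℝ (rootPoly (TT ℓ lam m)) :=
      edge_mem_vs hℓ hm1 (Or.inr ⟨j, hj, rfl, hzval⟩) (by omega) (by omega)
    have h2 := row_mem_vs hℓ hm1 ℓ (att ℓ lam j) hattle (by omega)
    have hze : (⟨(z : ℕ), by omega⟩ : Fin m) = z := Fin.eta _ _
    rw [hze] at h1
    have h3 : evec m z ⟨att ℓ lam j, by omega⟩ ∈ vectorSpan ℝ (rootPoly (TT ℓ lam m)) := by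
      rw [evec_symm]
      exact Submodule.neg_mem _ h1
    have := Submodule.add_mem _ h3 h2
    rwa [evec_trans] at this

lemma vectorSpan_rootPoly (hℓ : 1 ≤ ℓ) (hm1 : m = ℓ + 1 + (Freef ℓ lam).card) :
    vectorSpan ℝ (rootPoly (TT ℓ lam m)) = LinearMap.ker (sumF m) := by
  apply le_antisymm
  · rw [vectorSpan]
    apply Submodule.span_le.2
    rintro u ⟨x, hx, y, hy, rfl⟩
    have h1 := rootPoly_sub_ker hℓ hm1 hx
    have h2 := rootPoly_sub_ker hℓ hm1 hy
    simp only [SetLike.mem_coe, LinearMap.mem_ker] at h1 h2 ⊢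
    rw [vsub_eq_sub, map_sub, h1, h2, sub_zero]
  · intro u hu
    have hsum0 : (∑ z : Fin m, u z) = 0 := hu
    set top : Fin m := ⟨ℓ, by omega⟩ with htop
    have hrep : u = ∑ z : Fin m, u z • evec m z top := by
      funext t
      rw [Finset.sum_apply]
      have hz : ∀ z : Fin m, (u z • evec m z top) t =
          (if t = z then u z else 0) - u z * (if t = top then 1 else 0) := by
        intro z
        show u z * ((if t = z then (1:ℝ) else 0) - (if t = top then 1 else 0)) = _
        by_cases h : t = z <;> simp [h, mul_sub]
      simp only [hz]
      rw [Finset.sum_sub_distrib]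
      rw [Finset.sum_ite_eq Finset.univ t u, if_pos (Finset.mem_univ t)]
      rw [← Finset.sum_mul, hsum0, zero_mul, sub_zero]
    rw [hrep]
    apply Submodule.sum_mem
    intro z _
    exact Submodule.smul_mem _ _ (all_mem_vs hℓ hm1 z)

lemma finrank_ker_sumF (hm0 : 0 < m) :
    Module.finrank ℝ (LinearMap.ker (sumF m)) = m - 1 := by
  have hsurj : Function.Surjective (sumF m) := by
    intro x
    refine ⟨Pi.single ⟨0, hm0⟩ x, ?_⟩
    show (∑ t : Fin m, Pi.single (⟨0, hm0⟩ : Fin m) x t) = x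
    rw [Finset.sum_pi_single']
    rw [if_pos (Finset.mem_univ _)]
  have h1 := LinearMap.finrank_range_add_finrank_ker (sumF m)
  rw [LinearMap.range_eq_top.2 hsurj] at h1
  rw [finrank_top, Module.finrank_self] at h1
  rw [Module.finrank_fintype_fun_eq_card, Fintype.card_fin] at h1
  omega

end Poly

section Phi

/-- column vectors of the degeneration matrix. -/
def colv (ℓ : ℕ) (lam : ℕ → ℕ) (m n : ℕ) (s : Fin (2 * n)) : Fin m → ℝ :=
  if (s : ℕ) ≤ ℓ then eps m (s : ℕ)
  else if n ≤ (s : ℕ) ∧ (s : ℕ) ≤ n + lam 1 then eps m (wl ℓ lam ((s : ℕ) - n + 1))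
  else 0

/-- the degeneration linear map `φ`. -/
def phiMap (ℓ : ℕ) (lam : ℕ → ℕ) (m n : ℕ) : (Fin (2 * n) → ℝ) →ₗ[ℝ] (Fin m → ℝ) where
  toFun x := ∑ s : Fin (2 * n), x s • colv ℓ lam m n s
  map_add' x y := by
    simp only [Pi.add_apply, add_smul]
    rw [Finset.sum_add_distrib]
  map_smul' c x := by
    simp only [Pi.smul_apply, smul_eq_mul, RingHom.id_apply]
    rw [Finset.smul_sum]
    exact Finset.sum_congr rfl (fun s _ => (smul_smul c (x s) _).symm)

variable {ℓ m n : ℕ} {lam : ℕ → ℕ}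

lemma sum_ind_smul {N : ℕ} {t : ℕ} (ht : t < N) (f : Fin N → Fin m → ℝ) :
    (∑ s : Fin N, (if (s : ℕ) = t then (1:ℝ) else 0) • f s) = f ⟨t, ht⟩ := by
  rw [Finset.sum_eq_single (⟨t, ht⟩ : Fin N)]
  · simp
  · intro s _ hs
    rw [if_neg (fun h => hs (Fin.ext h)), zero_smul]
  · intro h
    exact absurd (Finset.mem_univ _) h

lemma phi_vtx (hℓ : 1 ≤ ℓ)
    (hA : ∀ i j : ℕ, 1 ≤ i → i ≤ j → j ≤ ℓ → lam j ≤ lam i)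
    (hn1 : ℓ + 1 ≤ n) (hn2 : lam 1 + 1 ≤ n)
    {p : ℕ × ℕ} (hp : p ∈ LsetN ℓ lam) :
    phiMap ℓ lam m n (vtx n p) = boxv ℓ lam m p := by
  obtain ⟨i, j⟩ := p
  obtain ⟨h1, h2, h3, h4⟩ := hp
  simp only at h1 h2 h3 h4
  have hjle : j ≤ lam 1 + 1 := le_trans h4 (mu_le hℓ hA h2)
  have hi2n : i - 1 < 2 * n := by omega
  have hj2n : n + j - 1 < 2 * n := by omega
  have hsplit : phiMap ℓ lam m n (vtx n (i, j)) =
      (∑ s : Fin (2 * n), (if (s : ℕ) = i - 1 then (1:ℝ) else 0) • colv ℓ lam m n s) -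
      (∑ s : Fin (2 * n), (if (s : ℕ) = n + j - 1 then (1:ℝ) else 0) • colv ℓ lam m n s) := by
    show (∑ s : Fin (2 * n), vtx n (i, j) s • colv ℓ lam m n s) = _
    rw [← Finset.sum_sub_distrib]
    apply Finset.sum_congr rfl
    intro s _
    show (((if (s : ℕ) = (i, j).1 - 1 then (1:ℝ) else 0) -
      (if (s : ℕ) = n + (i, j).2 - 1 then 1 else 0))) • colv ℓ lam m n s = _
    rw [sub_smul]
  rw [hsplit, sum_ind_smul hi2n, sum_ind_smul hj2n]
  have hc1 : colv ℓ lam m n ⟨i - 1, hi2n⟩ = eps m (i - 1) := by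
    rw [colv, if_pos]
    show i - 1 ≤ ℓ
    omega
  have hc2 : colv ℓ lam m n ⟨n + j - 1, hj2n⟩ = eps m (wl ℓ lam j) := by
    have hval : ((⟨n + j - 1, hj2n⟩ : Fin (2 * n)) : ℕ) = n + j - 1 := rfl
    rw [colv, hval, if_neg (by omega), if_pos (by omega),
      show n + j - 1 - n + 1 = j by omega]
  rw [hc1, hc2]
  rfl

end Phi

section Main

lemma perm_maps (n : ℕ) (π : Equiv.Perm ℕ) (hπ : IsPermOn n π) :
    ∀ x, 1 ≤ x → x ≤ n → 1 ≤ π x ∧ π x ≤ n := by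
  intro x hx1 hx2
  by_contra hcon
  have h1 : π (π x) = π x := hπ (π x) (by tauto)
  have h2 : π x = x := π.injective h1
  rw [h2] at hcon
  exact hcon ⟨hx1, hx2⟩

lemma RD_box_bounds (n : ℕ) (π : Equiv.Perm ℕ) (hπ : IsPermOn n π)
    {u v : ℕ} (h : (u, v) ∈ RD π) : u ≤ n ∧ v < n := by
  obtain ⟨i0, j0, hij, hπij, heq⟩ := h
  have hu : u = π j0 := (congrArg Prod.fst heq)
  have hv : v = i0 := (congrArg Prod.snd heq)
  have hj0 : j0 ≤ n := by
    by_contra hcon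
    push_neg at hcon
    have hπj0 : π j0 = j0 := hπ j0 (by omega)
    have hπi0 : n < π i0 := by omega
    rcases Nat.eq_zero_or_pos i0 with h0 | h0
    · have : π i0 = i0 := hπ i0 (by omega)
      omega
    · by_cases hi0n : i0 ≤ n
      · have := perm_maps n π hπ i0 h0 hi0n
        omega
      · have : π i0 = i0 := hπ i0 (by omega)
        omega
  have hj01 : 1 ≤ j0 := by omega
  have := perm_maps n π hπ j0 hj01 hj0
  omega

end Main

end St13

open St13 in
theorem stmt13 (n : ℕ) (hn : 1 ≤ n) (π : Equiv.Perm ℕ) (hπ : IsPermOn n π)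
    (ℓ : ℕ) (lam : ℕ → ℕ) (hdom : DominantOne π ℓ lam)
    (r c : ℕ) (hocc : Occupies (Lset π) r c)
    (m : ℕ) (hm : m = r + c - (EssSet π).ncard) :
    ∃ T : SimpleGraph (Fin m), T.IsTree ∧
      ∃ φ : (Fin (2 * n) → ℝ) →ₗ[ℝ] (Fin m → ℝ),
        φ '' convexHull ℝ (vtx n '' Lset π) = rootPoly T ∧
        Module.finrank ℝ ↥(vectorSpan ℝ (rootPoly T)) = m - 1 := by
  obtain ⟨hπ1, hℓ, hA, hP, hRD⟩ := hdom
  have hLset : Lset π = LsetN ℓ lam := Lset_eq hℓ hA hP hRD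
  have hEss : (EssSet π).ncard = (Cfin ℓ lam).card := Ess_ncard hℓ hA hP hRD
  obtain ⟨hocc1, hocc2, hocc3⟩ := hocc
  rw [hLset] at hocc1 hocc2 hocc3
  -- r = ℓ + 1
  have hbox1 : ((ℓ + 1 : ℕ), (1 : ℕ)) ∈ LsetN ℓ lam := by
    refine ⟨by omega, le_rfl, le_rfl, ?_⟩
    rw [mu, if_neg (by omega)]
    omega
  have hrge : ℓ + 1 ≤ r := (hocc1 _ hbox1).2.1
  have hrle : r ≤ ℓ + 1 := by
    obtain ⟨j, hj⟩ := hocc2 r (by omega) le_rfl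
    exact hj.2.1
  have hr : r = ℓ + 1 := by omega
  -- c = lam 1 + 1
  have hbox2 : ((1 : ℕ), (lam 1 + 1 : ℕ)) ∈ LsetN ℓ lam := by
    refine ⟨le_rfl, by omega, by omega, ?_⟩
    rw [mu, if_pos le_rfl]
  have hcge : lam 1 + 1 ≤ c := (hocc1 _ hbox2).2.2.2
  have hcle : c ≤ lam 1 + 1 := by
    obtain ⟨i, hi⟩ := hocc3 c (by omega) le_rfl
    exact le_trans hi.2.2.2 (mu_le hℓ hA hi.2.1)
  have hc : c = lam 1 + 1 := by omega
  -- m = ℓ + 1 + |Freef|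
  have hcards := card_Freef_add hℓ hA hP
  have hm1 : m = ℓ + 1 + (Freef ℓ lam).card := by
    rw [hEss, hr, hc] at hm
    omega
  have hm0 : 0 < m := by omega
  -- bounds involving n
  have hn1 : ℓ + 1 ≤ n := by
    have hbox : ((ℓ + 1 : ℕ), (lam ℓ + 1 : ℕ)) ∈ RD π := by
      rw [hRD]
      exact ⟨ℓ, lam ℓ, hℓ, le_rfl, hP ℓ hℓ le_rfl, le_rfl, rfl⟩
    exact (RD_box_bounds n π hπ hbox).1
  have hn2 : lam 1 + 1 ≤ n := by
    have hbox : ((2 : ℕ), (lam 1 + 1 : ℕ)) ∈ RD π := by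
      rw [hRD]
      exact ⟨1, lam 1, le_rfl, hℓ, hP 1 le_rfl hℓ, le_rfl, rfl⟩
    have := (RD_box_bounds n π hπ hbox).2
    omega
  refine ⟨TT ℓ lam m, TT_isTree hℓ hA hm1, phiMap ℓ lam m n, ?_, ?_⟩
  · rw [hLset, LinearMap.image_convexHull, ← Set.image_comp]
    have hcomp : (⇑(phiMap ℓ lam m n) ∘ vtx n) '' LsetN ℓ lam =
        boxv ℓ lam m '' LsetN ℓ lam :=
      Set.image_congr (fun p hp => phi_vtx hℓ hA hn1 hn2 hp)
    rw [hcomp, image_boxv hℓ hA hP hm1]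
    exact (rootPoly_TT hℓ hm1).symm
  · rw [vectorSpan_rootPoly hℓ hm1]
    exact finrank_ker_sumF hm0
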